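/- In the Neyman–Scott problem, the MLE σ̂² = (1/(4n)) Σ_{i=1}^n (X_{i1}−X_{i2})² is inconsistent: as n → ∞, σ̂² converges in probability to σ²/2 ≠ σ² (by the law of large numbers applied to the iid summands (X_{i1}−X_{i2})²/4 with mean σ²/2). -/

import Mathlib

open MeasureTheory ProbabilityTheory Filter
open Real Set
open scoped NNReal ENNReal Topology

lemma int_sq_exp {b : ℝ} (hb : 0 < b) :
    ∫ x : ℝ, x ^ 2 * rexp (-b * x ^ 2) = b ^ (-(3:ℝ)/2) * (√π / 2) := by
  have h1 : (∫ x : ℝ, x ^ 2 * rexp (-b * x ^ 2))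
      = ∫ x : ℝ, (fun t : ℝ => t ^ 2 * rexp (-b * t ^ 2)) |x| := by
    congr 1 with x
    simp [sq_abs]
  rw [h1, _root_.integral_comp_abs (f := fun t : ℝ => t ^ 2 * rexp (-b * t ^ 2))]
  have h2 : ∫ x in Ioi (0:ℝ), x ^ 2 * rexp (-b * x ^ 2)
      = ∫ x in Ioi (0:ℝ), x ^ (2:ℝ) * rexp (-b * x ^ (2:ℝ)) := by
    refine setIntegral_congr_fun measurableSet_Ioi (fun x hx => ?_)
    rw [← Real.rpow_natCast x 2]
    norm_num
  rw [h2, integral_rpow_mul_exp_neg_mul_rpow two_pos (by norm_num) hb]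
  have h3 : Real.Gamma ((2 + 1) / 2) = √π / 2 := by
    have := Real.Gamma_add_one (s := (1:ℝ)/2) (by norm_num)
    rw [show ((2:ℝ) + 1) / 2 = 1/2 + 1 by norm_num, this, Real.Gamma_one_half_eq]
    ring
  rw [h3]
  ring_nf

section moments
variable {v : ℝ≥0}

lemma gaussianReal_zero_eq_withDensity (hv : v ≠ 0) :
    gaussianReal 0 v = volume.withDensity
      (fun x => ((gaussianPDFReal 0 v x).toNNReal : ℝ≥0∞)) := by
  rw [gaussianReal_of_var_ne_zero _ hv]
  rfl

lemma pdf_eq (hv : v ≠ 0) (x : ℝ) :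
    gaussianPDFReal 0 v x
      = (√(2 * π * v))⁻¹ * (rexp (-(((2:ℝ)*v)⁻¹) * x ^ 2)) := by
  rw [gaussianPDFReal]
  congr 1
  rw [sub_zero]
  congr 1
  field_simp

lemma integrable_sq_pdf_mul (hv : v ≠ 0) (g : ℝ → ℝ)
    (hg : Integrable (fun x : ℝ => g x * rexp (-(((2:ℝ)*v)⁻¹) * x ^ 2))) :
    Integrable (fun x : ℝ => g x * (((gaussianPDFReal 0 v x).toNNReal : ℝ≥0∞)).toReal) := by
  have : (fun x : ℝ => g x * (((gaussianPDFReal 0 v x).toNNReal : ℝ≥0∞)).toReal)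
      = fun x => (√(2 * π * v))⁻¹ * (g x * rexp (-(((2:ℝ)*v)⁻¹) * x ^ 2)) := by
    funext x
    rw [ENNReal.coe_toReal, Real.coe_toNNReal _ (gaussianPDFReal_nonneg _ _ _), pdf_eq hv]
    ring
  rw [this]
  exact hg.const_mul _

lemma integrable_sq_gaussian (hv : v ≠ 0) :
    Integrable (fun x : ℝ => x ^ 2) (gaussianReal 0 v) := by
  have hb : 0 < ((2:ℝ)*v)⁻¹ := by
    have : 0 < (v:ℝ) := by positivity
    positivity
  rw [gaussianReal_zero_eq_withDensity hv,
    integrable_withDensity_iff ((measurable_gaussianPDFReal 0 v).real_toNNReal.coe_nnreal_ennreal)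
      (Filter.Eventually.of_forall fun x => ENNReal.coe_lt_top)]
  refine integrable_sq_pdf_mul hv _ ?_
  have := integrable_rpow_mul_exp_neg_mul_sq hb (s := 2) (by norm_num)
  refine this.congr ?_
  filter_upwards with x
  rw [← Real.rpow_natCast x 2]
  norm_num

lemma integrable_id_gaussian (hv : v ≠ 0) :
    Integrable (fun x : ℝ => x) (gaussianReal 0 v) := by
  have hb : 0 < ((2:ℝ)*v)⁻¹ := by
    have : 0 < (v:ℝ) := by positivity
    positivity
  rw [gaussianReal_zero_eq_withDensity hv,
    integrable_withDensity_iff ((measurable_gaussianPDFReal 0 v).real_toNNReal.coe_nnreal_ennreal)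
      (Filter.Eventually.of_forall fun x => ENNReal.coe_lt_top)]
  exact integrable_sq_pdf_mul hv _ (integrable_mul_exp_neg_mul_sq hb)

lemma integral_id_gaussian (hv : v ≠ 0) :
    ∫ x, x ∂(gaussianReal 0 v) = 0 := by
  have hmap : Measure.map (fun x : ℝ => -x) (gaussianReal 0 v) = gaussianReal 0 v := by
    have h := gaussianReal_map_const_mul (μ := 0) (v := v) (-1)
    have h2 : (⟨(-1:ℝ)^2, sq_nonneg _⟩ : ℝ≥0) = 1 := by
      ext; norm_num
    simp only [h2, one_mul, mul_zero] at h
    simpa [neg_one_mul] using h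
  have h3 : ∫ x, x ∂(gaussianReal 0 v)
      = ∫ x, -x ∂(gaussianReal 0 v) := by
    conv_lhs => rw [← hmap]
    rw [integral_map (f := fun x : ℝ => x) measurable_neg.aemeasurable measurable_id.aestronglyMeasurable]
  have h4 : ∫ x, -x ∂(gaussianReal 0 v) = - ∫ x, x ∂(gaussianReal 0 v) := integral_neg _
  linarith [h3, h4.symm]

lemma integral_sq_gaussian (hv : v ≠ 0) :
    ∫ x, x ^ 2 ∂(gaussianReal 0 v) = (v : ℝ) := by
  have hv' : 0 < (v:ℝ) := by positivity
  have hb : 0 < ((2:ℝ)*v)⁻¹ := by positivity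
  rw [gaussianReal_zero_eq_withDensity hv,
    integral_withDensity_eq_integral_smul (measurable_gaussianPDFReal 0 v).real_toNNReal]
  have h1 : (fun x : ℝ => (gaussianPDFReal 0 v x).toNNReal • x ^ 2)
      = fun x => (√(2 * π * v))⁻¹ * (x ^ 2 * rexp (-(((2:ℝ)*v)⁻¹) * x ^ 2)) := by
    funext x
    rw [NNReal.smul_def, Real.coe_toNNReal _ (gaussianPDFReal_nonneg _ _ _), smul_eq_mul, pdf_eq hv]
    ring
  rw [h1, integral_const_mul, int_sq_exp hb]
  -- now arithmetic
  rw [show ((2:ℝ)*v)⁻¹ ^ (-(3:ℝ)/2) = ((2:ℝ)*v) ^ ((3:ℝ)/2) by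
    rw [← Real.rpow_neg_one, ← Real.rpow_mul (by positivity)]
    norm_num]
  rw [show √(2 * π * (v:ℝ)) = √π * √(2*v) by
    rw [← Real.sqrt_mul (by positivity)]; ring_nf]
  rw [show ((2:ℝ)*v) ^ ((3:ℝ)/2) = (2*(v:ℝ)) * √(2*v) by
    rw [show ((3:ℝ)/2) = 1 + (1:ℝ)/2 by norm_num,
      Real.rpow_add (by positivity), Real.rpow_one, ← Real.sqrt_eq_rpow]]
  have hsp : (0:ℝ) < √π := Real.sqrt_pos.mpr pi_pos
  have hs2v : (0:ℝ) < √(2*v) := Real.sqrt_pos.mpr (by positivity)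
  field_simp
end moments

section main
variable {Ω : Type*} [MeasurableSpace Ω] {P : Measure Ω} [IsProbabilityMeasure P]

lemma integrable_sub_sq_prod {v : ℝ≥0} (hv : v ≠ 0) :
    Integrable (fun p : ℝ × ℝ => (p.1 - p.2) ^ 2)
      ((gaussianReal 0 v).prod (gaussianReal 0 v)) := by
  have h1 : (fun p : ℝ × ℝ => (p.1 - p.2) ^ 2)
      = fun p : ℝ × ℝ => (p.1 ^ 2 * 1 + 1 * p.2 ^ 2) - 2 * (p.1 * p.2) := by
    funext p; ring
  rw [h1]
  have hsq := integrable_sq_gaussian hv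
  have hid := integrable_id_gaussian hv
  have hone : Integrable (fun _ : ℝ => (1:ℝ)) (gaussianReal 0 v) := integrable_const _
  exact ((hsq.mul_prod hone).add (hone.mul_prod hsq)).sub ((hid.mul_prod hid).const_mul 2)

lemma integral_sub_sq_prod {v : ℝ≥0} (hv : v ≠ 0) :
    ∫ p : ℝ × ℝ, (p.1 - p.2) ^ 2 ∂((gaussianReal 0 v).prod (gaussianReal 0 v))
      = 2 * (v : ℝ) := by
  have hsq := integrable_sq_gaussian hv
  have hid := integrable_id_gaussian hv
  have hone : Integrable (fun _ : ℝ => (1:ℝ)) (gaussianReal 0 v) := integrable_const _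
  have h1 : (fun p : ℝ × ℝ => (p.1 - p.2) ^ 2)
      = fun p : ℝ × ℝ => (p.1 ^ 2 * 1 + 1 * p.2 ^ 2) - 2 * (p.1 * p.2) := by
    funext p; ring
  rw [h1, integral_sub (f := fun p : ℝ × ℝ => p.1 ^ 2 * 1 + 1 * p.2 ^ 2)
      (g := fun p : ℝ × ℝ => 2 * (p.1 * p.2))
      (((hsq.mul_prod hone).add (hone.mul_prod hsq)))
      ((hid.mul_prod hid).const_mul 2),
    integral_add (f := fun p : ℝ × ℝ => p.1 ^ 2 * 1) (g := fun p : ℝ × ℝ => 1 * p.2 ^ 2)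
      (hsq.mul_prod hone) (hone.mul_prod hsq),
    integral_prod_mul (fun x : ℝ => x ^ 2) (fun _ : ℝ => (1:ℝ)),
    integral_prod_mul (fun _ : ℝ => (1:ℝ)) (fun x : ℝ => x ^ 2),
    integral_const_mul,
    integral_prod_mul (fun x : ℝ => x) (fun x : ℝ => x),
    integral_sq_gaussian hv, integral_id_gaussian hv]
  simp
  ring
end main

/-- Neyman–Scott inconsistency of the MLE of the variance:
`σ̂²_n = (1/(4n)) Σ_{i<n} (X_{i1}-X_{i2})²` converges in probability to
`σ²/2 ≠ σ²`. -/
theorem neyman_scott_inconsistency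
    {Ω : Type*} [MeasurableSpace Ω] (P : Measure Ω) [IsProbabilityMeasure P]
    (X : ℕ → Fin 2 → Ω → ℝ) (ξ : ℕ → ℝ) (v : NNReal) (hv : v ≠ 0)
    (hmeas : ∀ i j, Measurable (X i j))
    (hdist : ∀ i j, Measure.map (X i j) P = gaussianReal (ξ i) v)
    (hpair : ∀ i, IndepFun (X i 0) (X i 1) P)
    (hiid : iIndepFun
      (fun i ω => X i 0 ω - X i 1 ω) P) :
    TendstoInMeasure P
      (fun (n : ℕ) ω => (1 / (4 * (n : ℝ))) * ∑ i ∈ Finset.range n,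
        (X i 0 ω - X i 1 ω) ^ 2)
      atTop (fun _ => (v : ℝ) / 2) ∧
    (v : ℝ) / 2 ≠ (v : ℝ) := by
  have hvpos : 0 < (v : ℝ) := by
    have : 0 < v := lt_of_le_of_ne (by positivity) (Ne.symm hv)
    exact_mod_cast this
  set μ0 : Measure ℝ := gaussianReal 0 v with hμ0
  set D : ℕ → Ω → ℝ := fun i ω => X i 0 ω - X i 1 ω with hD
  have hDmeas : ∀ i, Measurable (D i) := fun i => (hmeas i 0).sub (hmeas i 1)
  set ν : Measure ℝ := Measure.map (fun p : ℝ × ℝ => p.1 - p.2) (μ0.prod μ0) with hν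
  have hsubm : Measurable (fun p : ℝ × ℝ => p.1 - p.2) :=
    measurable_fst.sub measurable_snd
  -- distribution of the differences
  have hDmap : ∀ i, Measure.map (D i) P = ν := by
    intro i
    set Z : Fin 2 → Ω → ℝ := fun j ω => X i j ω - ξ i with hZ
    have hZmeas : ∀ j, Measurable (Z j) := fun j => (hmeas i j).sub measurable_const
    have hZmap : ∀ j, Measure.map (Z j) P = μ0 := by
      intro j
      have : Z j = (fun x : ℝ => x + (-ξ i)) ∘ (X i j) := by
        funext ω; simp [hZ, sub_eq_add_neg]
      rw [this, ← Measure.map_map (measurable_add_const _) (hmeas i j), hdist i j,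
        gaussianReal_map_add_const, add_neg_cancel]
    have hZind : IndepFun (Z 0) (Z 1) P :=
      (hpair i).comp (measurable_id.sub_const _) (measurable_id.sub_const _)
    have hjoint : Measure.map (fun ω => (Z 0 ω, Z 1 ω)) P = μ0.prod μ0 :=
      ((indepFun_iff_map_prod_eq_prod_map_map (hZmeas 0).aemeasurable
        (hZmeas 1).aemeasurable).mp hZind).trans (by rw [hZmap 0, hZmap 1])
    have hcomp : D i = (fun p : ℝ × ℝ => p.1 - p.2) ∘ (fun ω => (Z 0 ω, Z 1 ω)) := by
      funext ω; simp [hD, hZ]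
    rw [hcomp, ← Measure.map_map hsubm ((hZmeas 0).prodMk (hZmeas 1)), hjoint]
  set Y : ℕ → Ω → ℝ := fun i ω => (D i ω) ^ 2 with hY
  have hYmeas : ∀ i, Measurable (Y i) := fun i => (hDmeas i).pow_const 2
  have hsqm : Measurable (fun x : ℝ => x ^ 2) := measurable_id.pow_const 2
  -- identically distributed
  have hident : ∀ i, IdentDistrib (Y i) (Y 0) P P := by
    intro i
    have hDid : IdentDistrib (D i) (D 0) P P :=
      ⟨(hDmeas i).aemeasurable, (hDmeas 0).aemeasurable, by rw [hDmap i, hDmap 0]⟩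
    exact hDid.comp hsqm
  -- pairwise independence
  have hindep : Pairwise (Function.onFun (IndepFun · · P) Y) := fun i j hij =>
    (hiid.indepFun hij).comp hsqm hsqm
  -- integrability
  have hνint : Integrable (fun x : ℝ => x ^ 2) ν := by
    rw [hν]
    exact (integrable_map_measure hsqm.aestronglyMeasurable hsubm.aemeasurable).mpr
      (integrable_sub_sq_prod hv)
  have hint : Integrable (Y 0) P := by
    have := (integrable_map_measure hsqm.aestronglyMeasurable
      (hDmeas 0).aemeasurable).mp (by rwa [hDmap 0])
    exact this
  -- mean
  have hmean : P[Y 0] = 2 * (v : ℝ) := by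
    have h1 : P[Y 0] = ∫ x, x ^ 2 ∂(Measure.map (D 0) P) :=
      (integral_map (hDmeas 0).aemeasurable hsqm.aestronglyMeasurable).symm
    rw [h1, hDmap 0, hν,
      integral_map hsubm.aemeasurable hsqm.aestronglyMeasurable,
      integral_sub_sq_prod hv]
  -- strong law
  have hslln := strong_law_ae_real Y hint hindep hident
  rw [hmean] at hslln
  have hae : ∀ᵐ ω ∂P, Tendsto
      (fun n : ℕ => (1 / (4 * (n : ℝ))) * ∑ i ∈ Finset.range n, (X i 0 ω - X i 1 ω) ^ 2)
      atTop (𝓝 ((v : ℝ) / 2)) := by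
    filter_upwards [hslln] with ω hω
    have h2 := hω.const_mul (1/4 : ℝ)
    have h3 : (1/4 : ℝ) * (2 * (v:ℝ)) = (v : ℝ) / 2 := by ring
    rw [h3] at h2
    have hfun : (fun n : ℕ => (1 / (4 * (n : ℝ))) * ∑ i ∈ Finset.range n,
        (X i 0 ω - X i 1 ω) ^ 2)
        = fun n : ℕ => 1/4 * ((∑ i ∈ Finset.range n, Y i ω) / (n : ℝ)) := by
      funext n
      rw [Finset.mul_sum, Finset.sum_div, Finset.mul_sum]
      refine Finset.sum_congr rfl fun i _ => ?_
      show (1 / (4 * (n : ℝ))) * (X i 0 ω - X i 1 ω) ^ 2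
        = 1/4 * ((X i 0 ω - X i 1 ω) ^ 2 / (n : ℝ))
      ring
    rw [hfun]
    exact h2
  refine ⟨tendstoInMeasure_of_tendsto_ae (fun n => ?_) hae, fun h => ?_⟩
  · exact (Measurable.const_mul (Finset.measurable_sum _
      fun i _ => ((hmeas i 0).sub (hmeas i 1)).pow_const 2) _).aestronglyMeasurable
  · linarith
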